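/- arXiv:2412.13557 — 2 statements merged into one kernel-verified Lean document; each statement's English description precedes it below -/
import Mathlib

section
/- Let f : S^{n-1} → (0,∞) be continuous and define the Wulff shape [f] = {x ∈ ℝⁿ : x·v ≤ f(v) for all v ∈ S^{n-1}} and the convex hull body ⟨f⟩ = conv{f(u)u : u ∈ S^{n-1}}. Then the polar body of [f] equals ⟨1/f⟩. -/
open Set Metric MeasureTheory


lemma myIsCompact_convexHull {E : Type*} [NormedAddCommGroup E] [NormedSpace ℝ E]
    [FiniteDimensional ℝ E] {s : Set E} (hs : IsCompact s) :
    IsCompact (convexHull ℝ s) := by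
  rcases s.eq_empty_or_nonempty with rfl | ⟨p0, hp0⟩
  · simp
  set D := Module.finrank ℝ E + 1 with hD
  have hmap : convexHull ℝ s =
      (fun p : (Fin D → ℝ) × (Fin D → E) => ∑ i, p.1 i • p.2 i) ''
        ((stdSimplex ℝ (Fin D)) ×ˢ (Set.univ.pi fun _ => s)) := by
    apply Subset.antisymm
    · intro x hx
      obtain ⟨ι, hι, z, w, hzs, hai, hw0, hw1, hwz⟩ :=
        eq_pos_convex_span_of_mem_convexHull hx
      have hcard : Fintype.card ι ≤ D := by
        have h1 := hai.card_le_finrank_succ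
        have h2 := Submodule.finrank_le (vectorSpan ℝ (Set.range z))
        omega
      obtain ⟨e⟩ := Function.Embedding.nonempty_of_card_le
        (by simpa using hcard : Fintype.card ι ≤ Fintype.card (Fin D))
      set w' : Fin D → ℝ := Function.extend e w 0 with hw'
      set z' : Fin D → E := Function.extend e z (fun _ => p0) with hz'
      have hsub : (Finset.univ.image e) ⊆ Finset.univ := Finset.subset_univ _
      have hsumw : ∑ j, w' j = 1 := by
        rw [← Finset.sum_subset hsub (fun j _ hj => by
          rw [hw', Function.extend_apply' _ _ _ (by simpa using hj)]; rfl)]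
        rw [Finset.sum_image (fun a _ b _ h => e.injective h)]
        simp only [hw', e.injective.extend_apply]
        exact hw1
      have hsumz : ∑ j, w' j • z' j = x := by
        rw [← Finset.sum_subset hsub (fun j _ hj => by
          rw [hw', Function.extend_apply' _ _ _ (by simpa using hj)]
          simp)]
        rw [Finset.sum_image (fun a _ b _ h => e.injective h)]
        simp only [hw', hz', e.injective.extend_apply]
        exact hwz
      refine ⟨(w', z'), ⟨⟨fun j => ?_, hsumw⟩, fun j _ => ?_⟩, hsumz⟩
      · show 0 ≤ w' j
        rcases em (∃ i, e i = j) with ⟨i, rfl⟩ | h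
        · rw [hw', e.injective.extend_apply]; exact (hw0 i).le
        · rw [hw', Function.extend_apply' _ _ _ h]; rfl
      · show z' j ∈ s
        rcases em (∃ i, e i = j) with ⟨i, rfl⟩ | h
        · rw [hz', e.injective.extend_apply]; exact hzs ⟨i, rfl⟩
        · rw [hz', Function.extend_apply' _ _ _ h]; exact hp0
    · rintro _ ⟨⟨w, z⟩, ⟨⟨hw0, hw1⟩, hz⟩, rfl⟩
      exact mem_convexHull_of_exists_fintype w z hw0 hw1
        (fun i => hz i (mem_univ i)) rfl
  rw [hmap]
  exact ((isCompact_stdSimplex (𝕜 := ℝ) (ι := Fin D)).prod (isCompact_univ_pi fun _ => hs)).image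
    (continuous_finset_sum _ fun i _ =>
      ((continuous_apply i).comp continuous_fst).smul
        ((continuous_apply i).comp continuous_snd))

noncomputable def suppFn {n : ℕ} (K : Set (EuclideanSpace ℝ (Fin n)))
    (x : EuclideanSpace ℝ (Fin n)) : ℝ :=
  sSup ((fun y => inner ℝ x y : EuclideanSpace ℝ (Fin n) → ℝ) '' K)

noncomputable def radialFn {n : ℕ} (K : Set (EuclideanSpace ℝ (Fin n)))
    (x : EuclideanSpace ℝ (Fin n)) : ℝ :=
  sSup {t : ℝ | 0 < t ∧ t • x ∈ K}

def polarBody {n : ℕ} (K : Set (EuclideanSpace ℝ (Fin n))) :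
    Set (EuclideanSpace ℝ (Fin n)) :=
  {x | ∀ y ∈ K, (inner ℝ x y : ℝ) ≤ 1}

def wulff {n : ℕ} (f : EuclideanSpace ℝ (Fin n) → ℝ) : Set (EuclideanSpace ℝ (Fin n)) :=
  {x | ∀ v ∈ sphere (0 : EuclideanSpace ℝ (Fin n)) 1, (inner ℝ x v : ℝ) ≤ f v}

theorem polar_wulff_eq_hull_inv {n : ℕ} (hn : 1 ≤ n)
    (f : EuclideanSpace ℝ (Fin n) → ℝ)
    (hf : ContinuousOn f (sphere (0 : EuclideanSpace ℝ (Fin n)) 1))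
    (hfpos : ∀ v ∈ sphere (0 : EuclideanSpace ℝ (Fin n)) 1, 0 < f v) :
    polarBody (wulff f) =
      convexHull ℝ ((fun u => (f u)⁻¹ • u) '' sphere (0 : EuclideanSpace ℝ (Fin n)) 1) := by
  apply Set.Subset.antisymm
  · -- polar ⊆ hull, by separation
    intro x hx
    by_contra hxC
    set S := sphere (0 : EuclideanSpace ℝ (Fin n)) 1 with hS
    set C := convexHull ℝ ((fun u => (f u)⁻¹ • u) '' S) with hC
    have hcomp : IsCompact ((fun u => (f u)⁻¹ • u) '' S) :=
      (isCompact_sphere 0 1).image_of_continuousOn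
        ((hf.inv₀ fun v hv => (hfpos v hv).ne').smul continuousOn_id)
    obtain ⟨g, u, hgu, hux⟩ :=
      geometric_hahn_banach_closed_point (convex_convexHull ℝ _)
        (myIsCompact_convexHull hcomp).isClosed hxC
    set w := (InnerProductSpace.toDual ℝ _).symm g with hw
    have hgw : ∀ z, g z = inner ℝ w z := fun z =>
      (InnerProductSpace.toDual_symm_apply).symm
    have key : ∀ v ∈ S, (f v)⁻¹ * inner ℝ w v < u := by
      intro v hv
      have h := hgu _ (subset_convexHull ℝ _ ⟨v, hv, rfl⟩)
      rwa [hgw, inner_smul_right] at h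
    have hupos : 0 < u := by
      rcases eq_or_ne w 0 with h0 | h0
      · have v₀mem : (EuclideanSpace.single (⟨0, hn⟩ : Fin n) (1:ℝ)) ∈ S := by
          simp [hS, EuclideanSpace.norm_single]
        have := key _ v₀mem
        rwa [h0, inner_zero_left, mul_zero] at this
      · have hvS : (‖w‖⁻¹ • w) ∈ S := by
          simp [hS, mem_sphere_zero_iff_norm, norm_smul, inv_mul_cancel₀ (norm_ne_zero_iff.mpr h0)]
        have hk := key _ hvS
        rw [inner_smul_right, real_inner_self_eq_norm_sq] at hk
        have h1 : 0 < (f (‖w‖⁻¹ • w))⁻¹ := inv_pos.mpr (hfpos _ hvS)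
        have hwpos : 0 < ‖w‖ := norm_pos_iff.mpr h0
        have h2 : 0 < ‖w‖⁻¹ * ‖w‖ ^ 2 := mul_pos (inv_pos.mpr hwpos) (pow_pos hwpos 2)
        nlinarith
    rcases eq_or_ne w 0 with h0 | h0
    · have : g x = 0 := by rw [hgw, h0, inner_zero_left]
      linarith [hux, this.symm.le]
    · have hp : (u⁻¹ • w) ∈ wulff f := by
        intro v hv
        have hk := key v hv
        have hfv : 0 < f v := hfpos v hv
        rw [real_inner_smul_left]
        have h1 : inner ℝ w v < u * f v := by
          have := mul_lt_mul_of_pos_left hk hfv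
          rw [← mul_assoc, mul_inv_cancel₀ hfv.ne', one_mul] at this
          linarith
        calc u⁻¹ * inner ℝ w v ≤ u⁻¹ * (u * f v) := by
              apply mul_le_mul_of_nonneg_left h1.le (inv_pos.mpr hupos).le
          _ = f v := by field_simp
      have hle := hx _ hp
      rw [real_inner_smul_right, real_inner_comm] at hle
      have : inner ℝ w x ≤ u := by
        have := mul_le_mul_of_nonneg_left hle hupos.le
        rwa [← mul_assoc, mul_inv_cancel₀ hupos.ne', one_mul, mul_one] at this
      rw [hgw] at hux
      linarith
  · -- hull ⊆ polar
    apply convexHull_min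
    · rintro _ ⟨v, hv, rfl⟩ y hy
      have h1 := hy v hv
      have h2 := hfpos v hv
      rw [real_inner_smul_left, real_inner_comm]
      calc (f v)⁻¹ * inner ℝ y v ≤ (f v)⁻¹ * f v :=
            mul_le_mul_of_nonneg_left h1 (inv_pos.mpr h2).le
        _ = 1 := inv_mul_cancel₀ h2.ne'
    · intro x hx y hy a b ha hb hab z hz
      have h1 := hx z hz
      have h2 := hy z hz
      rw [inner_add_left, real_inner_smul_left, real_inner_smul_left]
      nlinarith
end

section
/- Let μ be a non-zero finite even Borel measure on S^{n-1} that is not concentrated on any closed hemisphere, let p > 0, q > 0, and for an origin-symmetric convex body Q define Φ(Q) = (1/p)∫_{S^{n-1}} h_Q(v)^p dμ(v) + ∫_{S^{n-1}} ∫_{ρ_Q(u)}^∞ e^{-r²/2} r^{q-1} dr du. If (Q_l) is a sequence of origin-symmetric convex bodies with sup_l Φ(Q_l) < ∞, then the sequence (Q_l) is uniformly bounded, i.e., there exists R > 0 with Q_l ⊆ R·B for all l. -/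
open Set Metric MeasureTheory

noncomputable def gaussTail (q : ℝ) (s : ℝ) : ℝ :=
  ∫ r in Ioi s, Real.exp (-r ^ 2 / 2) * r ^ (q - 1)

/-! ### Auxiliary lemmas -/

lemma radialFn_nonneg {n : ℕ} (K : Set (EuclideanSpace ℝ (Fin n)))
    (x : EuclideanSpace ℝ (Fin n)) : 0 ≤ radialFn K x :=
  Real.sSup_nonneg fun t ht => ht.1.le

lemma gaussTail_nonneg (q : ℝ) {s : ℝ} (hs : 0 ≤ s) : 0 ≤ gaussTail q s := by
  refine setIntegral_nonneg measurableSet_Ioi fun r hr => ?_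
  have hr0 : 0 ≤ r := hs.trans (le_of_lt hr)
  exact mul_nonneg (Real.exp_pos _).le (Real.rpow_nonneg hr0 _)

lemma bddAbove_inner_image {n : ℕ} {K : Set (EuclideanSpace ℝ (Fin n))} (hK : IsCompact K)
    (x : EuclideanSpace ℝ (Fin n)) :
    BddAbove ((fun y => (inner ℝ x y : ℝ)) '' K) :=
  hK.bddAbove_image ((continuous_const.inner continuous_id).continuousOn)

lemma le_suppFn {n : ℕ} {K : Set (EuclideanSpace ℝ (Fin n))} (hK : IsCompact K)
    {y : EuclideanSpace ℝ (Fin n)} (hy : y ∈ K) (x : EuclideanSpace ℝ (Fin n)) :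
    (inner ℝ x y : ℝ) ≤ suppFn K x :=
  le_csSup (bddAbove_inner_image hK x) ⟨y, hy, rfl⟩

lemma suppFn_le {n : ℕ} {K : Set (EuclideanSpace ℝ (Fin n))} (hne : K.Nonempty)
    {x : EuclideanSpace ℝ (Fin n)} {M : ℝ} (h : ∀ y ∈ K, (inner ℝ x y : ℝ) ≤ M) :
    suppFn K x ≤ M :=
  csSup_le (hne.image _) (by rintro _ ⟨y, hy, rfl⟩; exact h y hy)

lemma suppFn_nonneg {n : ℕ} {K : Set (EuclideanSpace ℝ (Fin n))} (hK : IsCompact K)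
    (h0 : (0 : EuclideanSpace ℝ (Fin n)) ∈ K) (x : EuclideanSpace ℝ (Fin n)) :
    0 ≤ suppFn K x := by
  have := le_suppFn hK h0 x
  simpa using this

lemma suppFn_continuous {n : ℕ} {K : Set (EuclideanSpace ℝ (Fin n))} (hK : IsCompact K)
    (h0 : (0 : EuclideanSpace ℝ (Fin n)) ∈ K) {M : ℝ} (hM : ∀ y ∈ K, ‖y‖ ≤ M) :
    Continuous (suppFn K) := by
  have hne : K.Nonempty := ⟨0, h0⟩
  have hM0 : 0 ≤ M := by simpa using hM 0 h0
  have key : ∀ a b : EuclideanSpace ℝ (Fin n), suppFn K a - suppFn K b ≤ M * ‖a - b‖ := by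
    intro a b
    have : suppFn K a ≤ suppFn K b + M * ‖a - b‖ := by
      refine suppFn_le hne fun y hy => ?_
      have h1 : (inner ℝ a y : ℝ) = inner ℝ b y + inner ℝ (a - b) y := by
        rw [← inner_add_left, add_sub_cancel]
      have h2 : (inner ℝ (a - b) y : ℝ) ≤ M * ‖a - b‖ := by
        calc (inner ℝ (a - b) y : ℝ) ≤ ‖a - b‖ * ‖y‖ := real_inner_le_norm _ _
          _ ≤ ‖a - b‖ * M := by
              exact mul_le_mul_of_nonneg_left (hM y hy) (norm_nonneg _)
          _ = M * ‖a - b‖ := mul_comm _ _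
      rw [h1]
      exact add_le_add (le_suppFn hK hy b) h2
    linarith
  have : LipschitzWith ⟨M, hM0⟩ (suppFn K) := by
    refine LipschitzWith.of_dist_le_mul fun a b => ?_
    rw [Real.dist_eq, dist_eq_norm]
    rw [abs_sub_le_iff]
    constructor
    · exact key a b
    · have := key b a
      rwa [norm_sub_rev] at this
  exact this.continuous

theorem uniform_boundedness_of_functional_bound {n : ℕ} (hn : 2 ≤ n)
    (p q : ℝ) (hp : 0 < p) (hq : 0 < q)
    (μ : Measure (EuclideanSpace ℝ (Fin n))) [IsFiniteMeasure μ] (hμ : μ ≠ 0)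
    (hsupp : μ (sphere (0 : EuclideanSpace ℝ (Fin n)) 1)ᶜ = 0)
    (heven : μ.map (fun x => -x) = μ)
    (hnotconc : ∀ u ∈ sphere (0 : EuclideanSpace ℝ (Fin n)) 1,
      0 < ∫ v, max (inner ℝ v u : ℝ) 0 ^ p ∂μ)
    (Q : ℕ → Set (EuclideanSpace ℝ (Fin n)))
    (hconv : ∀ l, Convex ℝ (Q l)) (hcomp : ∀ l, IsCompact (Q l))
    (h0 : ∀ l, 0 ∈ interior (Q l)) (hsym : ∀ l x, x ∈ Q l → -x ∈ Q l)
    (C : ℝ)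
    (hΦ : ∀ l, (1 / p) * (∫ v, suppFn (Q l) v ^ p ∂μ) +
        (∫ u : sphere (0 : EuclideanSpace ℝ (Fin n)) 1,
          gaussTail q (radialFn (Q l) u) ∂(volume.toSphere)) ≤ C) :
    ∃ R > 0, ∀ l, Q l ⊆ closedBall (0 : EuclideanSpace ℝ (Fin n)) R := by
  haveI : Nonempty (Fin n) := ⟨⟨0, by omega⟩⟩
  -- a.e. every point is on the sphere
  have hμae : ∀ᵐ v ∂μ, ‖v‖ = 1 := by
    have : ∀ᵐ v ∂μ, v ∈ sphere (0 : EuclideanSpace ℝ (Fin n)) 1 := by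
      rw [MeasureTheory.ae_iff]
      exact hsupp
    filter_upwards [this] with v hv using mem_sphere_zero_iff_norm.mp hv
  -- the functional F
  set F : EuclideanSpace ℝ (Fin n) → ℝ := fun u => ∫ v, max (inner ℝ v u : ℝ) 0 ^ p ∂μ with hF
  -- continuity of F on the sphere
  have hFcont : ContinuousOn F (sphere (0 : EuclideanSpace ℝ (Fin n)) 1) := by
    rw [continuousOn_iff_continuous_restrict]
    refine MeasureTheory.continuous_of_dominated
      (bound := fun _ => (1 : ℝ)) (fun u => ?_) (fun u => ?_) (integrable_const 1) ?_
    · exact (Continuous.aestronglyMeasurable (by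
        have : Continuous fun v : EuclideanSpace ℝ (Fin n) => max (inner ℝ v (u : EuclideanSpace ℝ (Fin n)) : ℝ) 0 := by
          exact (continuous_id.inner continuous_const).max continuous_const
        exact this.rpow_const fun v => Or.inr hp.le))
    · filter_upwards [hμae] with v hv
      have hu : ‖(u : EuclideanSpace ℝ (Fin n))‖ = 1 := mem_sphere_zero_iff_norm.mp u.2
      have h1 : (inner ℝ v (u : EuclideanSpace ℝ (Fin n)) : ℝ) ≤ 1 := by
        calc (inner ℝ v (u : EuclideanSpace ℝ (Fin n)) : ℝ) ≤ ‖v‖ * ‖(u : EuclideanSpace ℝ (Fin n))‖ := real_inner_le_norm _ _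
          _ = 1 := by rw [hv, hu, one_mul]
      have h2 : max (inner ℝ v (u : EuclideanSpace ℝ (Fin n)) : ℝ) 0 ≤ 1 := max_le h1 zero_le_one
      have h3 : (0 : ℝ) ≤ max (inner ℝ v (u : EuclideanSpace ℝ (Fin n)) : ℝ) 0 := le_max_right _ _
      rw [Real.norm_eq_abs, abs_of_nonneg (Real.rpow_nonneg h3 _)]
      exact Real.rpow_le_one h3 h2 hp.le
    · refine Filter.Eventually.of_forall fun v => ?_
      have : Continuous fun u : sphere (0 : EuclideanSpace ℝ (Fin n)) 1 => max (inner ℝ v (u : EuclideanSpace ℝ (Fin n)) : ℝ) 0 := by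
        exact (continuous_const.inner continuous_subtype_val).max continuous_const
      exact this.rpow_const fun u => Or.inr hp.le
  -- minimum of F on the sphere
  have hSne : (sphere (0 : EuclideanSpace ℝ (Fin n)) 1).Nonempty := NormedSpace.sphere_nonempty.mpr zero_le_one
  obtain ⟨u₀, hu₀, hmin'⟩ := (isCompact_sphere (0 : EuclideanSpace ℝ (Fin n)) 1).exists_isMinOn hSne hFcont
  have hmin : ∀ u ∈ sphere (0 : EuclideanSpace ℝ (Fin n)) 1, F u₀ ≤ F u := fun u hu => hmin' hu
  set c₀ : ℝ := F u₀ with hc₀def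
  have hc₀ : 0 < c₀ := hnotconc u₀ hu₀
  -- bound on the support function integrals
  have hbound : ∀ l, ∫ v, suppFn (Q l) v ^ p ∂μ ≤ p * C := by
    intro l
    have hg : 0 ≤ ∫ u : sphere (0 : EuclideanSpace ℝ (Fin n)) 1, gaussTail q (radialFn (Q l) u) ∂(volume.toSphere) :=
      integral_nonneg fun u => gaussTail_nonneg q (radialFn_nonneg _ _)
    have := hΦ l
    have h1 : (1 / p) * (∫ v, suppFn (Q l) v ^ p ∂μ) ≤ C := by linarith
    calc ∫ v, suppFn (Q l) v ^ p ∂μ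
        = p * ((1 / p) * (∫ v, suppFn (Q l) v ^ p ∂μ)) := by
          field_simp
      _ ≤ p * C := mul_le_mul_of_nonneg_left h1 hp.le
  -- main estimate: for every x in Q l, c₀ * ‖x‖^p ≤ p * C
  have hkey : ∀ l, ∀ x ∈ Q l, c₀ * ‖x‖ ^ p ≤ p * C := by
    intro l x hx
    rcases eq_or_ne x 0 with rfl | hx0
    · have hnn : 0 ≤ ∫ v, suppFn (Q l) v ^ p ∂μ :=
        integral_nonneg fun v =>
          Real.rpow_nonneg (suppFn_nonneg (hcomp l) (interior_subset (h0 l)) v) _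
      rw [norm_zero, Real.zero_rpow hp.ne', mul_zero]
      linarith [hbound l]
    · set u : EuclideanSpace ℝ (Fin n) := ‖x‖⁻¹ • x with hu_def
      have hxnorm : (0 : ℝ) < ‖x‖ := norm_pos_iff.mpr hx0
      have hu : u ∈ sphere (0 : EuclideanSpace ℝ (Fin n)) 1 := by
        rw [mem_sphere_zero_iff_norm, hu_def, norm_smul, norm_inv, norm_norm,
          inv_mul_cancel₀ hxnorm.ne']
      have hxu : ‖x‖ • u = x := by
        rw [hu_def, smul_smul, mul_inv_cancel₀ hxnorm.ne', one_smul]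
      -- integrability of suppFn (Q l) ^ p
      obtain ⟨M, hM⟩ := (hcomp l).isBounded.subset_closedBall 0
      have hM' : ∀ y ∈ Q l, ‖y‖ ≤ M := fun y hy => by
        simpa using mem_closedBall_iff_norm.mp (hM hy)
      have h0K : (0 : EuclideanSpace ℝ (Fin n)) ∈ Q l := interior_subset (h0 l)
      have hM0 : 0 ≤ M := by simpa using hM' 0 h0K
      have hsfcont : Continuous (suppFn (Q l)) := suppFn_continuous (hcomp l) h0K hM'
      have hint : Integrable (fun v => suppFn (Q l) v ^ p) μ := by
        refine Integrable.mono' (integrable_const (M ^ p))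
          ((hsfcont.rpow_const fun v => Or.inr hp.le).aestronglyMeasurable) ?_
        filter_upwards [hμae] with v hv
        have h1 : suppFn (Q l) v ≤ M := by
          refine suppFn_le ⟨0, h0K⟩ fun y hy => ?_
          calc (inner ℝ v y : ℝ) ≤ ‖v‖ * ‖y‖ := real_inner_le_norm _ _
            _ ≤ 1 * M := by
                exact mul_le_mul (le_of_eq hv) (hM' y hy) (norm_nonneg _) zero_le_one
            _ = M := one_mul _
        have h2 : 0 ≤ suppFn (Q l) v := suppFn_nonneg (hcomp l) h0K v
        rw [Real.norm_eq_abs, abs_of_nonneg (Real.rpow_nonneg h2 _)]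
        exact Real.rpow_le_rpow h2 h1 hp.le
      -- pointwise comparison
      have hpt : ∀ v : EuclideanSpace ℝ (Fin n), ‖x‖ ^ p * max (inner ℝ v u : ℝ) 0 ^ p ≤ suppFn (Q l) v ^ p := by
        intro v
        have hmax0 : (0 : ℝ) ≤ max (inner ℝ v u : ℝ) 0 := le_max_right _ _
        have e1 : ‖x‖ ^ p * max (inner ℝ v u : ℝ) 0 ^ p
            = (‖x‖ * max (inner ℝ v u : ℝ) 0) ^ p :=
          (Real.mul_rpow (norm_nonneg x) hmax0).symm
        have e2 : ‖x‖ * max (inner ℝ v u : ℝ) 0 = max (inner ℝ v x : ℝ) 0 := by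
          rw [mul_max_of_nonneg _ _ (norm_nonneg x), mul_zero,
            ← real_inner_smul_right, hxu]
        rw [e1, e2]
        refine Real.rpow_le_rpow (le_max_right _ _) ?_ hp.le
        refine max_le ?_ (suppFn_nonneg (hcomp l) h0K v)
        exact le_suppFn (hcomp l) hx v
      -- chain the inequalities
      have step1 : ‖x‖ ^ p * c₀ ≤ ‖x‖ ^ p * F u :=
        mul_le_mul_of_nonneg_left (hmin u hu) (Real.rpow_nonneg (norm_nonneg x) _)
      have step2 : ‖x‖ ^ p * F u = ∫ v, ‖x‖ ^ p * max (inner ℝ v u : ℝ) 0 ^ p ∂μ := by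
        rw [hF]
        exact (integral_const_mul _ _).symm
      have step3 : (∫ v, ‖x‖ ^ p * max (inner ℝ v u : ℝ) 0 ^ p ∂μ)
          ≤ ∫ v, suppFn (Q l) v ^ p ∂μ := by
        refine integral_mono_of_nonneg ?_ hint (Filter.Eventually.of_forall hpt)
        exact Filter.Eventually.of_forall fun v =>
          mul_nonneg (Real.rpow_nonneg (norm_nonneg x) _)
            (Real.rpow_nonneg (le_max_right _ _) _)
      calc c₀ * ‖x‖ ^ p = ‖x‖ ^ p * c₀ := mul_comm _ _
        _ ≤ ‖x‖ ^ p * F u := step1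
        _ = ∫ v, ‖x‖ ^ p * max (inner ℝ v u : ℝ) 0 ^ p ∂μ := step2
        _ ≤ ∫ v, suppFn (Q l) v ^ p ∂μ := step3
        _ ≤ p * C := hbound l
  -- conclude
  refine ⟨max ((p * C / c₀) ^ (1 / p)) 1, lt_of_lt_of_le zero_lt_one (le_max_right _ _),
    fun l x hx => ?_⟩
  rw [mem_closedBall_iff_norm, sub_zero]
  have h1 : c₀ * ‖x‖ ^ p ≤ p * C := hkey l x hx
  have h2 : ‖x‖ ^ p ≤ p * C / c₀ := by
    rw [le_div_iff₀ hc₀]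
    linarith [h1]
  have h3 : (‖x‖ ^ p) ^ (1 / p) = ‖x‖ := by
    rw [← Real.rpow_mul (norm_nonneg x), mul_one_div_cancel hp.ne', Real.rpow_one]
  calc ‖x‖ = (‖x‖ ^ p) ^ (1 / p) := h3.symm
    _ ≤ (p * C / c₀) ^ (1 / p) :=
        Real.rpow_le_rpow (Real.rpow_nonneg (norm_nonneg x) _) h2 (by positivity)
    _ ≤ max ((p * C / c₀) ^ (1 / p)) 1 := le_max_left _ _
end
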